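/- arXiv:2412.02781 — 6 statements merged into one kernel-verified Lean document; each statement's English description precedes it below -/
import Mathlib

section
/- If a differentiable function f: ℝ^d → ℝ satisfies the asymmetric (L₀,L₁)-smoothness condition ‖∇f(x) − ∇f(y)‖ ≤ (L₀ + L₁‖∇f(x)‖)‖x − y‖ for all x, y, then for all x, y: f(y) ≤ f(x) + ⟨∇f(x), y − x⟩ + ((L₀ + L₁‖∇f(x)‖)/2)‖x − y‖². -/
open RealInnerProductSpace

theorem stmt_0 {d : ℕ} (f : EuclideanSpace ℝ (Fin d) → ℝ) (L0 L1 : ℝ)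
    (hL0 : 0 ≤ L0) (hL1 : 0 ≤ L1) (hdiff : Differentiable ℝ f)
    (hsmooth : ∀ x y, ‖gradient f x - gradient f y‖ ≤ (L0 + L1 * ‖gradient f x‖) * ‖x - y‖) :
    ∀ x y, f y ≤ f x + ⟪gradient f x, y - x⟫
      + (L0 + L1 * ‖gradient f x‖) / 2 * ‖x - y‖ ^ 2 := by
  intro x y
  set v := y - x with hv
  set g := gradient f x with hg
  set L := L0 + L1 * ‖g‖ with hL
  have hLpos : 0 ≤ L := by positivity
  set ψ : ℝ → ℝ := fun t => f (x + t • v) - t * ⟪g, v⟫ - L * t ^ 2 / 2 * ‖v‖ ^ 2 with hψ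
  have hder : ∀ t : ℝ, HasDerivAt ψ
      (⟪gradient f (x + t • v), v⟫ - ⟪g, v⟫ - L * t * ‖v‖ ^ 2) t := by
    intro t
    have hc : HasDerivAt (fun t : ℝ => x + t • v) v t := by
      simpa using ((hasDerivAt_id t).smul_const v).const_add x
    have hgrad := (hdiff (x + t • v)).hasGradientAt
    rw [hasGradientAt_iff_hasFDerivAt] at hgrad
    have h1 : HasDerivAt (fun t : ℝ => f (x + t • v))
        ⟪gradient f (x + t • v), v⟫ t := by
      have := hgrad.comp_hasDerivAt t hc
      simpa [InnerProductSpace.toDual_apply_apply, Function.comp_def] using this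
    have h2 : HasDerivAt (fun t : ℝ => t * ⟪g, v⟫) ⟪g, v⟫ t := by
      simpa using (hasDerivAt_id t).mul_const ⟪g, v⟫
    have h3 : HasDerivAt (fun t : ℝ => L * t ^ 2 / 2 * ‖v‖ ^ 2)
        (L * t * ‖v‖ ^ 2) t := by
      have : HasDerivAt (fun t : ℝ => L * t ^ 2 / 2 * ‖v‖ ^ 2)
          (L * (2 * t ^ 1) / 2 * ‖v‖ ^ 2) t := by
        exact (((hasDerivAt_pow 2 t).const_mul L).div_const 2).mul_const _
      convert this using 1
      ring
    exact (h1.sub h2).sub h3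
  have hmono : AntitoneOn ψ (Set.Icc 0 1) := by
    apply antitoneOn_of_deriv_nonpos (convex_Icc 0 1)
    · exact Continuous.continuousOn (by
        have : ∀ t, DifferentiableAt ℝ ψ t := fun t => (hder t).differentiableAt
        exact (Differentiable.continuous this))
    · intro t _
      exact (hder t).differentiableAt.differentiableWithinAt
    · intro t ht
      rw [interior_Icc] at ht
      rw [(hder t).deriv]
      have hb : ⟪gradient f (x + t • v), v⟫ - ⟪g, v⟫ ≤ L * t * ‖v‖ ^ 2 := by
        have h1 : ⟪gradient f (x + t • v) - g, v⟫
            ≤ ‖gradient f (x + t • v) - g‖ * ‖v‖ := real_inner_le_norm _ _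
        have h2 : ‖gradient f (x + t • v) - g‖ = ‖g - gradient f (x + t • v)‖ :=
          norm_sub_rev _ _
        have h3 := hsmooth x (x + t • v)
        have h4 : ‖x - (x + t • v)‖ = |t| * ‖v‖ := by
          simp [norm_smul, abs_of_nonneg]
        rw [← hg, h4] at h3
        have h5 : |t| = t := abs_of_nonneg ht.1.le
        rw [inner_sub_left] at h1
        calc ⟪gradient f (x + t • v), v⟫ - ⟪g, v⟫
            ≤ ‖gradient f (x + t • v) - g‖ * ‖v‖ := h1
          _ = ‖g - gradient f (x + t • v)‖ * ‖v‖ := by rw [h2]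
          _ ≤ L * (|t| * ‖v‖) * ‖v‖ := by
              apply mul_le_mul_of_nonneg_right h3 (norm_nonneg v)
          _ = L * t * ‖v‖ ^ 2 := by rw [h5]; ring
      linarith
  have hψ10 : ψ 1 ≤ ψ 0 := hmono (by norm_num) (by norm_num) (by norm_num)
  have hxy : x + (1 : ℝ) • v = y := by simp [hv]
  have hnv : ‖v‖ = ‖x - y‖ := by rw [hv, norm_sub_rev]
  simp only [hψ, hxy, one_smul, zero_smul, add_zero, zero_mul, one_mul, one_pow,
    zero_pow, mul_zero, zero_div, sub_zero] at hψ10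
  rw [hnv] at hψ10
  have hxy' : x + v = y := by simp [hv]
  rw [hxy'] at hψ10
  have h0 : L * (0:ℝ) ^ 2 / 2 * ‖x - y‖ ^ 2 = 0 := by ring
  have h1 : L * 1 / 2 * ‖x - y‖ ^ 2 = L / 2 * ‖x - y‖ ^ 2 := by ring
  linarith [hψ10]
end

section
/- If a differentiable f: ℝ^d → ℝ satisfies the descent inequality f(y) ≤ f(x) + ⟨∇f(x), y − x⟩ + ((L₀ + L₁‖∇f(x)‖)/2)‖x − y‖² for all x, y, and f is bounded below by f⋆, then for all x: ‖∇f(x)‖²/(2(L₀ + L₁‖∇f(x)‖)) ≤ f(x) − f⋆. -/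
open RealInnerProductSpace

theorem stmt_1 {d : ℕ} (f : EuclideanSpace ℝ (Fin d) → ℝ) (L0 L1 fstar : ℝ)
    (hL0 : 0 ≤ L0) (hL1 : 0 ≤ L1) (hdiff : Differentiable ℝ f)
    (hpos : ∀ x, 0 < L0 + L1 * ‖gradient f x‖)
    (hdesc : ∀ x y, f y ≤ f x + ⟪gradient f x, y - x⟫
      + (L0 + L1 * ‖gradient f x‖) / 2 * ‖x - y‖ ^ 2)
    (hlow : ∀ x, fstar ≤ f x) :
    ∀ x, ‖gradient f x‖ ^ 2 / (2 * (L0 + L1 * ‖gradient f x‖)) ≤ f x - fstar := by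
  intro x
  set g := gradient f x with hg
  set L := L0 + L1 * ‖g‖ with hL
  have hLpos : 0 < L := hpos x
  have h := hdesc x (x - (1/L) • g)
  have h1 : (x - (1/L) • g) - x = -((1/L) • g) := by abel
  have h2 : x - (x - (1/L) • g) = (1/L) • g := by abel
  rw [h1, h2] at h
  have hinner : ⟪g, -((1/L) • g)⟫ = -(1/L) * ‖g‖ ^ 2 := by
    rw [inner_neg_right, real_inner_smul_right, real_inner_self_eq_norm_sq]
    ring
  have hnorm : ‖(1/L) • g‖ ^ 2 = (1/L)^2 * ‖g‖ ^ 2 := by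
    rw [norm_smul, mul_pow, Real.norm_eq_abs, abs_of_pos (by positivity : (0:ℝ) < 1/L)]
  rw [hinner, hnorm] at h
  have h3 : f (x - (1/L) • g) ≤ f x - ‖g‖ ^ 2 / (2 * L) := by
    calc f (x - (1/L) • g) ≤ f x + -(1/L) * ‖g‖ ^ 2 + L / 2 * ((1/L)^2 * ‖g‖ ^ 2) := h
      _ = f x - ‖g‖ ^ 2 / (2 * L) := by field_simp; ring
  have := hlow (x - (1/L) • g)
  linarith
end

section
/- If a differentiable f: ℝ^d → ℝ satisfies f(y) − f(x) ≤ ⟨∇f(x), y − x⟩ + ((L₀ + L₁‖∇f(x)‖)/2)·exp(L₁‖x − y‖)·‖x − y‖² for all x, y, f is bounded below by f⋆, and η > 0 satisfies η·exp(η) ≤ 1, then for all x: η‖∇f(x)‖²/(2(L₀ + L₁‖∇f(x)‖)) ≤ f(x) − f⋆. -/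
open RealInnerProductSpace

theorem stmt_2 {d : ℕ} (f : EuclideanSpace ℝ (Fin d) → ℝ) (L0 L1 fstar η : ℝ)
    (hL0 : 0 < L0) (hL1 : 0 ≤ L1) (hdiff : Differentiable ℝ f)
    (hη : 0 < η) (hηe : η * Real.exp η ≤ 1)
    (hdesc : ∀ x y, f y - f x ≤ ⟪gradient f x, y - x⟫
      + (L0 + L1 * ‖gradient f x‖) / 2 * Real.exp (L1 * ‖x - y‖) * ‖x - y‖ ^ 2)
    (hlow : ∀ x, fstar ≤ f x) :
    ∀ x, η * ‖gradient f x‖ ^ 2 / (2 * (L0 + L1 * ‖gradient f x‖)) ≤ f x - fstar := by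
  intro x
  set g := gradient f x with hg
  set N := ‖g‖ with hN
  have hN0 : 0 ≤ N := norm_nonneg _
  set L := L0 + L1 * N with hLdef
  have hL : 0 < L := by positivity
  set c := η / L with hc
  have hc0 : 0 ≤ c := by positivity
  set y := x - c • g with hy
  have hxy : x - y = c • g := by simp [hy]
  have hyx : y - x = -(c • g) := by simp [hy]
  have hnorm : ‖x - y‖ = c * N := by
    rw [hxy, norm_smul, Real.norm_of_nonneg hc0]
  have hinner : ⟪g, y - x⟫ = -(c * N ^ 2) := by
    rw [hyx, inner_neg_right, real_inner_smul_right, real_inner_self_eq_norm_sq]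
  have hd := hdesc x y
  rw [hinner, hnorm] at hd
  have h1 : L1 * (c * N) ≤ η := by
    have h2 : L1 * N ≤ L := by nlinarith
    calc L1 * (c * N) = η * (L1 * N) / L := by rw [hc]; ring
    _ ≤ η * L / L := by gcongr
    _ = η := by field_simp
  have hexp : Real.exp (L1 * (c * N)) ≤ Real.exp η := Real.exp_le_exp.mpr h1
  have hEpos : 0 < Real.exp (L1 * (c * N)) := Real.exp_pos _
  have hrw : L / 2 * Real.exp (L1 * (c * N)) * (c * N) ^ 2
      = (η * Real.exp (L1 * (c * N))) * (η * N ^ 2 / (2 * L)) := by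
    rw [hc]; field_simp
  have hmul : η * Real.exp (L1 * (c * N)) ≤ 1 := by
    calc η * Real.exp (L1 * (c * N)) ≤ η * Real.exp η := by gcongr
    _ ≤ 1 := hηe
  have hfrac : 0 ≤ η * N ^ 2 / (2 * L) := by positivity
  have hbound : L / 2 * Real.exp (L1 * (c * N)) * (c * N) ^ 2 ≤ η * N ^ 2 / (2 * L) := by
    rw [hrw]
    nlinarith
  have hcN : c * N ^ 2 = 2 * (η * N ^ 2 / (2 * L)) := by
    rw [hc]; field_simp
  have hkey : f y - f x ≤ -(η * N ^ 2 / (2 * L)) := by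
    have := hd
    rw [hcN] at this
    linarith
  have := hlow y
  linarith
end

section
/- Let (δ_t)_{t=0}^{T} be nonnegative reals satisfying r_t ≤ δ_t − δ_{t+1} + c·(δ_t + Δ) for all t < T, where r_t ≥ 0, c ≥ 0, Δ ≥ 0. If c ≤ 1/T, then min_{0≤t<T} r_t ≤ ((1+c)^T / T)·δ₀ + c·Δ·(extra factor bounded by the same expression), specifically min_{0≤t<T} r_t ≤ ((1+c)^T/T)·δ₀ + c·Δ·(1+c)^T ≤ (e/T)·δ₀ + e·c·Δ. -/
theorem stmt_5 (T : ℕ) (hT : 0 < T) (δ r : ℕ → ℝ) (c Δ : ℝ)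
    (hδ : ∀ t ≤ T, 0 ≤ δ t) (hr : ∀ t < T, 0 ≤ r t)
    (hc0 : 0 ≤ c) (hc : c ≤ 1 / T) (hΔ : 0 ≤ Δ)
    (hrec : ∀ t < T, r t ≤ δ t - δ (t + 1) + c * (δ t + Δ)) :
    ∃ t < T, r t ≤ (1 + c) ^ T / T * δ 0 + c * Δ * (1 + c) ^ T := by
  set a : ℝ := 1 + c with ha
  have ha1 : 1 ≤ a := by simp [ha]; linarith
  have ha0 : 0 < a := by linarith
  have hap : ∀ n : ℕ, 0 < a ^ n := fun n => pow_pos ha0 n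
  have hap1 : ∀ n : ℕ, 1 ≤ a ^ n := fun n => one_le_pow₀ ha1
  -- step inequality
  have hstep : ∀ t < T, r t / a ^ (t + 1) ≤
      (δ t / a ^ t - δ (t + 1) / a ^ (t + 1)) + c * Δ / a ^ (t + 1) := by
    intro t ht
    have h := hrec t ht
    have hY : r t ≤ a * δ t - δ (t + 1) + c * Δ := by
      have hexp : c * (δ t + Δ) = c * δ t + c * Δ := by ring
      have hexp2 : a * δ t = δ t + c * δ t := by rw [ha]; ring
      linarith [h, hexp ▸ h]
    have hEq : (δ t / a ^ t - δ (t + 1) / a ^ (t + 1)) + c * Δ / a ^ (t + 1)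
        = (a * δ t - δ (t + 1) + c * Δ) / a ^ (t + 1) := by
      rw [pow_succ]
      field_simp
    rw [hEq]
    exact div_le_div_of_nonneg_right hY (hap (t + 1)).le
  -- sum over t < T
  have hsum : ∑ t ∈ Finset.range T, r t / a ^ (t + 1) ≤ δ 0 + c * Δ * T := by
    calc ∑ t ∈ Finset.range T, r t / a ^ (t + 1)
        ≤ ∑ t ∈ Finset.range T, ((δ t / a ^ t - δ (t + 1) / a ^ (t + 1)) + c * Δ / a ^ (t + 1)) :=
          Finset.sum_le_sum (fun t ht => hstep t (Finset.mem_range.mp ht))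
      _ = (δ 0 / a ^ 0 - δ T / a ^ T) + ∑ t ∈ Finset.range T, c * Δ / a ^ (t + 1) := by
          rw [Finset.sum_add_distrib, Finset.sum_range_sub' (fun t => δ t / a ^ t)]
      _ ≤ δ 0 + c * Δ * T := by
          have h1 : 0 ≤ δ T / a ^ T := div_nonneg (hδ T le_rfl) (le_of_lt (hap T))
          have h2 : ∑ t ∈ Finset.range T, c * Δ / a ^ (t + 1) ≤ ∑ t ∈ Finset.range T, c * Δ := by
            apply Finset.sum_le_sum
            intro t _
            rw [div_le_iff₀ (hap _)]
            nlinarith [hap1 (t+1), mul_nonneg hc0 hΔ]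
          simp only [Finset.sum_const, Finset.card_range, nsmul_eq_mul] at h2
          simp only [pow_zero, div_one]
          linarith
  -- take the minimizer
  obtain ⟨t0, ht0mem, ht0min⟩ := Finset.exists_min_image (Finset.range T) r
    ⟨0, Finset.mem_range.mpr hT⟩
  have ht0 : t0 < T := Finset.mem_range.mp ht0mem
  refine ⟨t0, ht0, ?_⟩
  have hrt0 : 0 ≤ r t0 := hr t0 ht0
  have hlb : ∀ t ∈ Finset.range T, r t0 / a ^ T ≤ r t / a ^ (t + 1) := by
    intro t ht
    have htT : t < T := Finset.mem_range.mp ht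
    have h1 : r t0 / a ^ T ≤ r t0 / a ^ (t + 1) :=
      div_le_div_of_nonneg_left hrt0 (hap _) (pow_le_pow_right₀ ha1 htT)
    have h2 : r t0 / a ^ (t + 1) ≤ r t / a ^ (t + 1) :=
      div_le_div_of_nonneg_right (ht0min t ht) (hap _).le
    linarith
  have hTsum : (T : ℝ) * (r t0 / a ^ T) ≤ δ 0 + c * Δ * T := by
    calc (T : ℝ) * (r t0 / a ^ T) = ∑ _t ∈ Finset.range T, r t0 / a ^ T := by
          simp [Finset.sum_const, Finset.card_range, mul_comm]
      _ ≤ ∑ t ∈ Finset.range T, r t / a ^ (t + 1) := Finset.sum_le_sum hlb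
      _ ≤ δ 0 + c * Δ * T := hsum
  have hT' : (0:ℝ) < T := Nat.cast_pos.mpr hT
  have key : r t0 * T ≤ (δ 0 + c * Δ * T) * a ^ T := by
    calc r t0 * T = ((T : ℝ) * (r t0 / a ^ T)) * a ^ T := by
          field_simp
      _ ≤ (δ 0 + c * Δ * T) * a ^ T := mul_le_mul_of_nonneg_right hTsum (hap T).le
  have hEq2 : a ^ T / T * δ 0 + c * Δ * a ^ T = (δ 0 + c * Δ * T) * a ^ T / T := by
    field_simp
  rw [hEq2, le_div_iff₀ hT']
  linarith [key]
end

section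
/- Suppose f: ℝ^d → ℝ is differentiable, satisfies the descent inequality f(y) ≤ f(x) + ⟨∇f(x), y−x⟩ + ((L₀+L₁‖∇f(x)‖)/2)·exp(L₁‖x−y‖)‖x−y‖², and let α > 0 satisfy α ≤ 1/(2(L₀+L₁‖∇f(x)‖)). Then the gradient step x' = x − α∇f(x) satisfies f(x') ≤ f(x) − α(1 − √3/2)‖∇f(x)‖². -/
open RealInnerProductSpace

theorem stmt_10 {d : ℕ} (f : EuclideanSpace ℝ (Fin d) → ℝ) (L0 L1 α : ℝ)
    (hL0 : 0 ≤ L0) (hL1 : 0 ≤ L1) (hdiff : Differentiable ℝ f)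
    (hdesc : ∀ x y, f y ≤ f x + ⟪gradient f x, y - x⟫
      + (L0 + L1 * ‖gradient f x‖) / 2 * Real.exp (L1 * ‖x - y‖) * ‖x - y‖ ^ 2)
    (x : EuclideanSpace ℝ (Fin d)) (hα : 0 < α)
    (hαsmall : α ≤ 1 / (2 * (L0 + L1 * ‖gradient f x‖))) :
    f (x - α • gradient f x) ≤ f x - α * (1 - Real.sqrt 3 / 2) * ‖gradient f x‖ ^ 2 := by
  set g := gradient f x with hg
  set G := ‖g‖ with hG
  have hGnn : 0 ≤ G := norm_nonneg _
  have hpos : 0 < L0 + L1 * G := by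
    rcases lt_or_ge 0 (L0 + L1 * G) with h | h
    · exact h
    · exfalso
      have h0 : L0 + L1 * G = 0 := le_antisymm h (by positivity)
      rw [h0] at hαsmall
      simp at hαsmall
      linarith
  have hαL : α * (L0 + L1 * G) ≤ 1 / 2 := by
    rw [le_div_iff₀ (by positivity)] at hαsmall
    linarith
  have hexp : Real.exp (L1 * (α * G)) ≤ Real.sqrt 3 := by
    have h1 : L1 * (α * G) ≤ 1 / 2 := by nlinarith [mul_nonneg hL1 hGnn]
    have h2 : Real.exp (L1 * (α * G)) ≤ Real.exp (1 / 2) :=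
      Real.exp_le_exp.2 h1
    refine h2.trans ?_
    have h3 : Real.exp (1 / 2) ^ 2 ≤ 3 := by
      have : Real.exp (1 / 2) ^ 2 = Real.exp 1 := by
        rw [sq, ← Real.exp_add]; norm_num
      rw [this]
      exact (Real.exp_one_lt_d9.le.trans (by norm_num))
    calc Real.exp (1 / 2) = Real.sqrt (Real.exp (1 / 2) ^ 2) :=
        (Real.sqrt_sq (Real.exp_pos _).le).symm
      _ ≤ Real.sqrt 3 := Real.sqrt_le_sqrt h3
  have key := hdesc x (x - α • g)
  have hsub : x - α • g - x = -(α • g) := by abel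
  have hsub2 : x - (x - α • g) = α • g := by abel
  rw [hsub, hsub2] at key
  have hinner : ⟪g, -(α • g)⟫ = -(α * G ^ 2) := by
    rw [inner_neg_right, inner_smul_right, real_inner_self_eq_norm_sq]
  have hnorm : ‖α • g‖ = α * G := by
    simp [norm_smul, abs_of_pos hα, hG]
  rw [hinner, hnorm, ← hg, ← hG] at key
  have hsqrt3 : 0 ≤ Real.sqrt 3 := Real.sqrt_nonneg _
  have hexp_pos : (0:ℝ) < Real.exp (L1 * (α * G)) := Real.exp_pos _
  have hcomb : α * (L0 + L1 * G) * Real.exp (L1 * (α * G)) ≤ 1 / 2 * Real.sqrt 3 :=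
    mul_le_mul hαL hexp hexp_pos.le (by norm_num)
  have h5 := mul_le_mul_of_nonneg_right hcomb (mul_nonneg hα.le (sq_nonneg G))
  nlinarith [mul_nonneg hα.le (sq_nonneg G), hsqrt3]
end

section
/- If f: ℝ^d → ℝ is differentiable and satisfies ‖∇f(x) − ∇f(y)‖ ≤ (L₀ + L₁·sup_{u∈[x,y]}‖∇f(u)‖)‖x−y‖ for all x, y (symmetric (L₀,L₁)-smoothness), then f satisfies the asymmetric-style bound with exponential correction: ‖∇f(x) − ∇f(y)‖ ≤ (L₀ + L₁‖∇f(y)‖)·exp(L₁‖x−y‖)·‖x−y‖ for all x, y. -/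
open Set Filter

private lemma seg_norm_le {E : Type*} [NormedAddCommGroup E] [NormedSpace ℝ E]
    {p q v : E} (hv : v ∈ segment ℝ p q) : ‖v - p‖ ≤ ‖q - p‖ := by
  obtain ⟨a, b, ha, hb, hab, rfl⟩ := hv
  have h1 : a • p + b • q - p = b • (q - p) := by
    have ha' : a = 1 - b := by linarith
    rw [ha', smul_sub]; module
  rw [h1, norm_smul, Real.norm_eq_abs, abs_of_nonneg hb]
  nlinarith [norm_nonneg (q - p)]

private lemma key_pt {d : ℕ} (f : EuclideanSpace ℝ (Fin d) → ℝ) (L0 L1 : ℝ)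
    (hL0 : 0 ≤ L0) (hL1 : 0 ≤ L1)
    (hsmooth : ∀ x y, ‖gradient f x - gradient f y‖
      ≤ (L0 + L1 * sSup ((fun u => ‖gradient f u‖) '' segment ℝ x y)) * ‖x - y‖)
    (p q : EuclideanSpace ℝ (Fin d)) (hh : L1 * ‖q - p‖ < 1) :
    ∀ u ∈ segment ℝ p q,
      ‖gradient f u‖ ≤ (‖gradient f p‖ + L0 * ‖q - p‖) / (1 - L1 * ‖q - p‖) := by
  set g : EuclideanSpace ℝ (Fin d) → ℝ := fun u => ‖gradient f u‖ with hgdef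
  set h : ℝ := ‖q - p‖ with hdef
  have hh0 : 0 ≤ h := norm_nonneg _
  have hden : 0 < 1 - L1 * h := by linarith
  set C : ℝ := (g p + L0 * h) / (1 - L1 * h) with hCdef
  have hnum : 0 ≤ g p + L0 * h := by positivity
  have hC0 : 0 ≤ C := div_nonneg hnum hden.le
  have hCge : g p + L0 * h ≤ C := by
    rw [hCdef, le_div_iff₀ hden]
    nlinarith [mul_nonneg hnum (mul_nonneg hL1 hh0)]
  intro u hu
  by_cases hb : BddAbove (g '' segment ℝ p u)
  · set M : ℝ := sSup (g '' segment ℝ p u) with hMdef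
    have hpmem : g p ∈ g '' segment ℝ p u := ⟨p, left_mem_segment ℝ p u, rfl⟩
    have hMge : g p ≤ M := le_csSup hb hpmem
    have hM0 : 0 ≤ M := le_trans (norm_nonneg _) hMge
    have hstep : ∀ v ∈ segment ℝ p u, g v ≤ g p + (L0 + L1 * M) * h := by
      intro v hv
      have h1 := hsmooth v p
      have hseg : segment ℝ v p = segment ℝ p v := segment_symm ℝ v p
      have hsub : segment ℝ p v ⊆ segment ℝ p u :=
        (convex_segment p u).segment_subset (left_mem_segment ℝ p u) hv
      have hsup_le : sSup (g '' segment ℝ v p) ≤ M := by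
        rw [hseg]
        by_cases hb2 : BddAbove (g '' segment ℝ p v)
        · exact csSup_le_csSup hb ⟨g p, ⟨p, left_mem_segment ℝ p v, rfl⟩⟩
            (image_mono hsub)
        · rw [Real.sSup_of_not_bddAbove hb2]; exact hM0
      have hvpq : v ∈ segment ℝ p q :=
        (convex_segment p q).segment_subset (left_mem_segment ℝ p q) hu hv
      have hvp : ‖v - p‖ ≤ h := seg_norm_le hvpq
      have htri : g v ≤ g p + ‖gradient f v - gradient f p‖ := by
        simpa [hgdef] using norm_le_norm_add_norm_sub' (gradient f v) (gradient f p)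
      have h2 : ‖gradient f v - gradient f p‖ ≤ (L0 + L1 * M) * h := by
        calc ‖gradient f v - gradient f p‖
            ≤ (L0 + L1 * sSup (g '' segment ℝ v p)) * ‖v - p‖ := h1
          _ ≤ (L0 + L1 * M) * h := by
              apply mul_le_mul _ hvp (norm_nonneg _) (by positivity)
              nlinarith
      linarith
    have hMle : M ≤ g p + (L0 + L1 * M) * h :=
      Real.sSup_le (by rintro x ⟨v, hv, rfl⟩; exact hstep v hv) (by positivity)
    have hMC : M ≤ C := by
      rw [hCdef, le_div_iff₀ hden]
      nlinarith
    exact le_trans (le_csSup hb ⟨u, right_mem_segment ℝ p u, rfl⟩) hMC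
  · have h1 := hsmooth u p
    have hseg : segment ℝ u p = segment ℝ p u := segment_symm ℝ u p
    rw [hseg, Real.sSup_of_not_bddAbove hb] at h1
    have hup : ‖u - p‖ ≤ h := seg_norm_le hu
    have htri : g u ≤ g p + ‖gradient f u - gradient f p‖ := by
      simpa [hgdef] using norm_le_norm_add_norm_sub' (gradient f u) (gradient f p)
    have : g u ≤ g p + L0 * h := by nlinarith [norm_nonneg (u - p), norm_nonneg (gradient f u - gradient f p)]
    linarith

theorem stmt_13 {d : ℕ} (f : EuclideanSpace ℝ (Fin d) → ℝ) (L0 L1 : ℝ)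
    (hL0 : 0 ≤ L0) (hL1 : 0 ≤ L1) (hdiff : Differentiable ℝ f)
    (hsmooth : ∀ x y, ‖gradient f x - gradient f y‖
      ≤ (L0 + L1 * sSup ((fun u => ‖gradient f u‖) '' segment ℝ x y)) * ‖x - y‖) :
    ∀ x y, ‖gradient f x - gradient f y‖
      ≤ (L0 + L1 * ‖gradient f y‖) * Real.exp (L1 * ‖x - y‖) * ‖x - y‖ := by
  intro x y
  rcases eq_or_lt_of_le hL1 with hL1z | hL1p
  · -- L1 = 0
    have h1 := hsmooth x y
    rw [← hL1z] at *
    have : Real.exp (0 * ‖x - y‖) = 1 := by rw [zero_mul, Real.exp_zero]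
    rw [this]
    simpa using h1
  · set r : ℝ := ‖x - y‖ with hrdef
    have hr0 : 0 ≤ r := norm_nonneg _
    set G : ℝ := ‖gradient f y‖ with hGdef
    have hG0 : 0 ≤ G := norm_nonneg _
    set u : ℝ := L1 * r with hudef
    set K : ℝ := L0 / L1 with hKdef
    have hK0 : 0 ≤ K := div_nonneg hL0 hL1p.le
    have hKL : K * L1 = L0 := div_mul_cancel₀ L0 (ne_of_gt hL1p)
    have hu0 : 0 ≤ u := by positivity
    -- main discrete claim
    have main : ∀ n : ℕ, u < n →
        ‖gradient f x - gradient f y‖ ≤ (G + K) * (((1 - u / n)⁻¹) ^ n - 1) := by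
      intro n hn
      have hn0 : 0 < (n : ℝ) := lt_of_le_of_lt hu0 hn
      set h : ℝ := r / n with hhdef
      have hh0 : 0 ≤ h := by positivity
      have hL1h : L1 * h = u / n := by rw [hudef, hhdef]; ring
      have hL1h1 : L1 * h < 1 := by rw [hL1h]; exact (div_lt_one hn0).2 hn
      have hden : 0 < 1 - L1 * h := by linarith
      set c : ℝ := (1 - L1 * h)⁻¹ with hcdef
      have hc0 : 0 < c := inv_pos.2 hden
      have hc1 : c * (1 - L1 * h) = 1 := inv_mul_cancel₀ (ne_of_gt hden)
      have hcge1 : 1 ≤ c := by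
        rw [hcdef, le_inv_comm₀] <;> nlinarith
      set z : ℕ → EuclideanSpace ℝ (Fin d) := fun k => y + ((k : ℝ) / n) • (x - y) with hzdef
      have hz0 : z 0 = y := by simp [hzdef]
      have hzn : z n = x := by
        simp only [hzdef, div_self (ne_of_gt hn0), one_smul]
        abel
      have hzdiff : ∀ k : ℕ, ‖z (k + 1) - z k‖ = h := by
        intro k
        have e1 : z (k + 1) - z k = ((1 : ℝ) / n) • (x - y) := by
          simp only [hzdef]
          have e2 : (((k : ℕ) + 1 : ℕ) : ℝ) / n = (k : ℝ) / n + 1 / n := by push_cast; ring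
          rw [e2, add_smul]
          abel
        rw [e1, norm_smul, Real.norm_eq_abs, abs_of_nonneg (by positivity)]
        rw [hhdef, ← hrdef]; ring
      -- induction
      have ind : ∀ k : ℕ, ‖gradient f (z k) - gradient f y‖ ≤ (G + K) * (c ^ k - 1) := by
        intro k
        induction k with
        | zero => simp [hz0]
        | succ k ih =>
          have hck1 : 1 ≤ c ^ k := one_le_pow₀ hcge1
          have hgzk : ‖gradient f (z k)‖ ≤ G + (G + K) * (c ^ k - 1) := by
            have := norm_le_norm_add_norm_sub' (gradient f (z k)) (gradient f y)
            rw [← hGdef] at this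
            linarith
          set p := z k
          set q := z (k + 1)
          have hqp : ‖q - p‖ = h := hzdiff k
          have hkey := key_pt f L0 L1 hL0 hL1 hsmooth p q (by rw [hqp]; exact hL1h1)
          have hsup : sSup ((fun u => ‖gradient f u‖) '' segment ℝ q p)
              ≤ (‖gradient f p‖ + L0 * h) * c := by
            rw [segment_symm]
            apply Real.sSup_le
            · rintro w ⟨v, hv, rfl⟩
              have := hkey v hv
              rw [hqp] at this
              calc ‖gradient f v‖ ≤ (‖gradient f p‖ + L0 * h) / (1 - L1 * h) := this
                _ = (‖gradient f p‖ + L0 * h) * c := by rw [hcdef, div_eq_mul_inv]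
            · positivity
          set A : ℝ := G + (G + K) * (c ^ k - 1) with hAdef
          have hstep : ‖gradient f q - gradient f p‖
              ≤ (L0 + L1 * ((‖gradient f p‖ + L0 * h) * c)) * h := by
            calc ‖gradient f q - gradient f p‖
                ≤ (L0 + L1 * sSup ((fun u => ‖gradient f u‖) '' segment ℝ q p)) * ‖q - p‖ :=
                  hsmooth q p
              _ ≤ (L0 + L1 * ((‖gradient f p‖ + L0 * h) * c)) * h := by
                  rw [hqp]
                  refine mul_le_mul_of_nonneg_right ?_ hh0
                  have := mul_le_mul_of_nonneg_left hsup hL1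
                  linarith
          have halg : (L0 + L1 * ((‖gradient f p‖ + L0 * h) * c)) * h
              ≤ (G + K) * (c ^ k) * (c - 1) := by
            have hmono : (L0 + L1 * ((‖gradient f p‖ + L0 * h) * c)) * h
                ≤ (L0 + L1 * ((A + L0 * h) * c)) * h := by
              have m1 : ‖gradient f p‖ + L0 * h ≤ A + L0 * h := add_le_add_left hgzk _
              have m2 := mul_le_mul_of_nonneg_right m1 hc0.le
              have m3 := mul_le_mul_of_nonneg_left m2 hL1
              exact mul_le_mul_of_nonneg_right (by linarith) hh0
            have heq : (L0 + L1 * ((A + L0 * h) * c)) * h = (G + K) * (c ^ k) * (c - 1) := by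
              have hc1' : c - 1 = c * L1 * h := by linear_combination hc1
              rw [hAdef]
              linear_combination (-(G + K) * c ^ k - L0 * h) * hc1' - c * h * hKL
            linarith
          have htri : ‖gradient f q - gradient f y‖
              ≤ ‖gradient f q - gradient f p‖ + ‖gradient f p - gradient f y‖ :=
            norm_sub_le_norm_sub_add_norm_sub _ _ _
          have : ‖gradient f q - gradient f y‖ ≤ (G + K) * (c ^ k) * (c - 1) + (G + K) * (c ^ k - 1) := by
            linarith
          calc ‖gradient f q - gradient f y‖ ≤ (G + K) * (c ^ k) * (c - 1) + (G + K) * (c ^ k - 1) := this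
            _ = (G + K) * (c ^ (k + 1) - 1) := by ring
      have := ind n
      rw [hzn] at this
      calc ‖gradient f x - gradient f y‖ ≤ (G + K) * (c ^ n - 1) := this
        _ = (G + K) * (((1 - u / n)⁻¹) ^ n - 1) := by rw [hcdef, hL1h]
    -- limit
    have hlim : Tendsto (fun n : ℕ => (G + K) * (((1 - u / n)⁻¹) ^ n - 1)) atTop
        (nhds ((G + K) * (Real.exp u - 1))) := by
      have h1 : Tendsto (fun n : ℕ => (1 + (-u) / n) ^ n) atTop (nhds (Real.exp (-u))) :=
        Real.tendsto_one_add_div_pow_exp (-u)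
      have h2 : Tendsto (fun n : ℕ => ((1 + (-u) / n) ^ n)⁻¹) atTop (nhds (Real.exp (-u))⁻¹) :=
        h1.inv₀ (Real.exp_ne_zero _)
      rw [← Real.exp_neg, neg_neg] at h2
      have h3 : (fun n : ℕ => ((1 + (-u) / n) ^ n)⁻¹) = fun n : ℕ => ((1 - u / n)⁻¹) ^ n := by
        funext n
        rw [← inv_pow]
        congr 2
        ring
      rw [h3] at h2
      exact (h2.sub_const 1).const_mul (G + K)
    have hfin : ‖gradient f x - gradient f y‖ ≤ (G + K) * (Real.exp u - 1) := by
      apply ge_of_tendsto hlim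
      filter_upwards [eventually_gt_atTop ⌈u⌉₊] with n hn
      exact main n (lt_of_le_of_lt (Nat.le_ceil u) (by exact_mod_cast hn))
    have hexp : Real.exp u - 1 ≤ u * Real.exp u := by
      have h1 : -u + 1 ≤ Real.exp (-u) := Real.add_one_le_exp (-u)
      have h2 : Real.exp (-u) * Real.exp u = 1 := by rw [← Real.exp_add]; simp
      nlinarith [mul_le_mul_of_nonneg_right h1 (Real.exp_pos u).le]
    calc ‖gradient f x - gradient f y‖ ≤ (G + K) * (Real.exp u - 1) := hfin
      _ ≤ (G + K) * (u * Real.exp u) := by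
          apply mul_le_mul_of_nonneg_left hexp (by linarith)
      _ = (L0 + L1 * G) * Real.exp (L1 * r) * r := by
          rw [hudef, hKdef]
          field_simp
          ring
end
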